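/- Every subgroup H of GL_3(𝔽_2) of order 21 is a maximal subgroup (i.e. H ≠ GL_3(𝔽_2) and the only subgroups of GL_3(𝔽_2) containing H are H and GL_3(𝔽_2) itself) and is self-normalizing: N_{GL_3(𝔽_2)}(H) = H. -/

import Mathlib

open Matrix Subgroup

private def Mc : Matrix (Fin 3) (Fin 3) (ZMod 2) := !![0,1,0; 0,0,1; 1,1,0]

private def ga : GL (Fin 3) (ZMod 2) := ⟨Mc, Mc ^ 6, by decide, by decide⟩
private def gb : GL (Fin 3) (ZMod 2) := ⟨Mcᵀ, (Mcᵀ) ^ 6, by decide, by decide⟩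

private lemma cardG : Nat.card (GL (Fin 3) (ZMod 2)) = 168 := by
  haveI : Fact (Nat.Prime 2) := ⟨by norm_num⟩
  rw [Matrix.card_GL_field]
  simp [Fin.prod_univ_three, ZMod.card]

private lemma sylow7 {Γ : Type*} [Group Γ] [Finite Γ] (h49 : ¬ (49 ∣ Nat.card Γ))
    (C : Subgroup Γ) (hC : Nat.card C = 7) : ∃ S : Sylow 7 Γ, (S : Subgroup Γ) = C := by
  haveI : Fact (Nat.Prime 7) := ⟨by norm_num⟩
  have hp : IsPGroup 7 C := IsPGroup.of_card (by rw [hC, pow_one])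
  obtain ⟨S, hle⟩ := hp.exists_le_sylow
  obtain ⟨k, hk⟩ := S.2.exists_card_eq
  have h7 : (7 : ℕ) ∣ Nat.card (S : Subgroup Γ) := by
    have := Subgroup.card_dvd_of_le hle
    rwa [hC] at this
  have hSd : Nat.card (S : Subgroup Γ) ∣ Nat.card Γ := Subgroup.card_subgroup_dvd_card _
  have hk1 : Nat.card (S : Subgroup Γ) = 7 := by
    rcases k with _ | _ | k
    · rw [hk] at h7; norm_num at h7
    · rw [hk, pow_one]
    · exfalso
      apply h49
      refine dvd_trans ?_ hSd
      rw [hk]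
      exact dvd_trans (by norm_num : (49:ℕ) ∣ 7 ^ 2) (pow_dvd_pow 7 (by omega))
  exact ⟨S, (Subgroup.eq_of_le_of_card_ge hle (by rw [hk1, hC])).symm⟩

private lemma no_normal (N : Subgroup (GL (Fin 3) (ZMod 2))) (hN : N.Normal)
    (h7 : 7 ∣ Nat.card N) (h84 : Nat.card N ∣ 84) : False := by
  haveI : Fact (Nat.Prime 7) := ⟨by norm_num⟩
  have ha7 : ga ^ 7 = 1 := by decide
  have hb7 : gb ^ 7 = 1 := by decide
  have horda : orderOf ga = 7 := orderOf_eq_prime ha7 (by decide)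
  have hordb : orderOf gb = 7 := orderOf_eq_prime hb7 (by decide)
  have cardA : Nat.card (zpowers ga) = 7 := by rw [Nat.card_zpowers, horda]
  have cardB : Nat.card (zpowers gb) = 7 := by rw [Nat.card_zpowers, hordb]
  have hbA : gb ∉ zpowers ga := by
    intro hmem
    have hfin : IsOfFinOrder ga := isOfFinOrder_of_finite ga
    obtain ⟨n, hn⟩ := hfin.mem_powers_iff_mem_zpowers.mpr hmem
    have hmod : ga ^ (n % 7) = gb := by
      rw [← horda, pow_mod_orderOf, horda] at *
      exact hn
    have hdec : ∀ m : Fin 7, ga ^ (m : ℕ) ≠ gb := by decide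
    exact hdec ⟨n % 7, Nat.mod_lt _ (by norm_num)⟩ hmod
  have hAB : zpowers ga ≠ zpowers gb := by
    intro h
    exact hbA (h ▸ mem_zpowers gb)
  have h49 : ¬ (49 ∣ Nat.card (GL (Fin 3) (ZMod 2))) := by rw [cardG]; norm_num
  -- every subgroup of order 7 is contained in N
  have key : ∀ C : Subgroup (GL (Fin 3) (ZMod 2)), Nat.card C = 7 → C ≤ N := by
    intro C hC
    obtain ⟨Q, hQ⟩ := Sylow.exists_subgroup_card_pow_prime (G := N) 7 (n := 1)
      (by rw [pow_one]; exact h7)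
    have hQ' : Nat.card (Q.map N.subtype) = 7 := by
      rw [← Nat.card_congr (Subgroup.equivMapOfInjective Q N.subtype N.subtype_injective).toEquiv]
      rw [hQ, pow_one]
    obtain ⟨SQ, hSQ⟩ := sylow7 h49 (Q.map N.subtype) hQ'
    obtain ⟨SC, hSC⟩ := sylow7 h49 C hC
    obtain ⟨g, hg⟩ := MulAction.exists_smul_eq (GL (Fin 3) (ZMod 2)) SQ SC
    rw [← hSC, ← hg]
    intro x hx
    rw [Sylow.smul_def, Sylow.pointwise_smul_def] at hx
    rw [Subgroup.mem_smul_pointwise_iff_exists] at hx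
    obtain ⟨s, hs, rfl⟩ := hx
    have hsN : s ∈ N := by
      rw [hSQ] at hs
      exact Subgroup.map_subtype_le Q hs
    exact hN.conj_mem s hsN g
  have hAN : zpowers ga ≤ N := key _ cardA
  have hBN : zpowers gb ≤ N := key _ cardB
  have cardA' : Nat.card ((zpowers ga).subgroupOf N) = 7 := by
    rw [Nat.card_congr (Subgroup.subgroupOfEquivOfLe hAN).toEquiv]; exact cardA
  have cardB' : Nat.card ((zpowers gb).subgroupOf N) = 7 := by
    rw [Nat.card_congr (Subgroup.subgroupOfEquivOfLe hBN).toEquiv]; exact cardB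
  have h49N : ¬ (49 ∣ Nat.card N) := fun h => absurd (h.trans h84) (by norm_num)
  obtain ⟨SA, hSA⟩ := sylow7 h49N _ cardA'
  obtain ⟨SB, hSB⟩ := sylow7 h49N _ cardB'
  have hne : SA ≠ SB := by
    intro h
    apply hAB
    have : (zpowers ga).subgroupOf N = (zpowers gb).subgroupOf N := by
      rw [← hSA, ← hSB, h]
    rw [Subgroup.subgroupOf_inj, inf_of_le_left hAN, inf_of_le_left hBN] at this
    exact this
  have hnontriv : Nontrivial (Sylow 7 N) := ⟨SA, SB, hne⟩
  have h2 : 1 < Nat.card (Sylow 7 N) := Finite.one_lt_card_iff_nontrivial.mpr hnontriv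
  have hmod : Nat.card (Sylow 7 N) % 7 = 1 % 7 := card_sylow_modEq_one 7 N
  have hdvd : Nat.card (Sylow 7 N) ∣ (SA : Subgroup N).index := Sylow.card_dvd_index SA
  have hidx : (SA : Subgroup N).index * 7 = Nat.card N := by
    rw [← (SA : Subgroup N).index_mul_card, hSA, cardA']
  have hidx12 : (SA : Subgroup N).index ∣ 12 := by
    have : (SA : Subgroup N).index * 7 ∣ 12 * 7 := by
      rw [hidx]; exact (by norm_num : (84:ℕ) = 12 * 7) ▸ h84
    exact (Nat.mul_dvd_mul_iff_right (by norm_num : 0 < 7)).mp this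
  have hn12 : Nat.card (Sylow 7 N) ∣ 12 := hdvd.trans hidx12
  have hle : Nat.card (Sylow 7 N) ≤ 12 := Nat.le_of_dvd (by norm_num) hn12
  set n := Nat.card (Sylow 7 N)
  interval_cases n <;> omega

private lemma no_middle (K : Subgroup (GL (Fin 3) (ZMod 2)))
    (hc : Nat.card K = 42 ∨ Nat.card K = 84) : False := by
  set G := GL (Fin 3) (ZMod 2)
  set N := K.normalCore with hNdef
  have hNle : N ≤ K := K.normalCore_le
  have hNd : Nat.card N ∣ Nat.card K := Subgroup.card_dvd_of_le hNle
  have hiK : K.index * Nat.card K = 168 := by rw [K.index_mul_card, cardG]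
  have hidxval : K.index = 4 ∨ K.index = 2 := by
    rcases hc with h | h <;> rw [h] at hiK <;> omega
  -- N.index divides (K.index)!
  have hker : N.index ∣ Nat.card (Equiv.Perm (G ⧸ K)) := by
    rw [hNdef, Subgroup.normalCore_eq_ker, Subgroup.index_ker]
    exact Subgroup.card_subgroup_dvd_card _
  have hperm : Nat.card (Equiv.Perm (G ⧸ K)) = (K.index).factorial := by
    have : DecidableEq (G ⧸ K) := Classical.decEq _
    have : Fintype (G ⧸ K) := Fintype.ofFinite _
    rw [Nat.card_eq_fintype_card, Fintype.card_perm, ← Nat.card_eq_fintype_card]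
    rfl
  have hN24 : N.index ∣ 24 := by
    rw [hperm] at hker
    rcases hidxval with h | h <;> rw [h] at hker
    · exact hker
    · exact hker.trans (by norm_num)
  have hiN : N.index * Nat.card N = 168 := by rw [N.index_mul_card, cardG]
  have h168 : (168 : ℕ) ∣ 24 * Nat.card N := by
    rw [← hiN]
    exact Nat.mul_dvd_mul_right hN24 _
  have h84 : Nat.card N ∣ 84 := by
    rcases hc with h | h <;> rw [h] at hNd
    · exact hNd.trans (by norm_num)
    · exact hNd
  have hNle84 : Nat.card N ≤ 84 := Nat.le_of_dvd (by norm_num) h84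
  have hNpos : 0 < Nat.card N := Nat.card_pos
  have h7 : 7 ∣ Nat.card N := by
    set c := Nat.card N
    interval_cases c <;> omega
  exact no_normal N K.normalCore_normal h7 h84

/-- Every subgroup `H` of `GL_3(𝔽₂)` of order `21` is a maximal subgroup
and is self-normalizing: `N_{GL_3(𝔽₂)}(H) = H`. -/
theorem stmt10 (H : Subgroup (GL (Fin 3) (ZMod 2))) (hH : Nat.card H = 21) :
    (H ≠ ⊤ ∧ ∀ K : Subgroup (GL (Fin 3) (ZMod 2)), H ≤ K → K = H ∨ K = ⊤) ∧
    Subgroup.normalizer (H : Set (GL (Fin 3) (ZMod 2))) = H := by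
  have hmax : ∀ K : Subgroup (GL (Fin 3) (ZMod 2)), H ≤ K → K = H ∨ K = ⊤ := by
    intro K hK
    have h21 : (21 : ℕ) ∣ Nat.card K := hH ▸ Subgroup.card_dvd_of_le hK
    have h168 : Nat.card K ∣ 168 := by rw [← cardG]; exact Subgroup.card_subgroup_dvd_card K
    obtain ⟨d, hd⟩ := h21
    have hd8 : d ∣ 8 := by
      have : 21 * d ∣ 21 * 8 := by rw [← hd]; exact h168
      exact (Nat.mul_dvd_mul_iff_left (by norm_num : 0 < 21)).mp this
    have hdle : d ≤ 8 := Nat.le_of_dvd (by norm_num) hd8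
    have hdpos : 0 < d := by
      rcases Nat.eq_zero_or_pos d with h | h
      · exfalso; rw [h, mul_zero] at hd; exact absurd (hd ▸ Nat.card_pos) (by norm_num)
      · exact h
    interval_cases d
    · left
      exact (Subgroup.eq_of_le_of_card_ge hK (by rw [hH, hd])).symm
    · exact absurd (no_middle K (Or.inl (by rw [hd]))) not_false
    · exact absurd hd8 (by norm_num)
    · exact absurd (no_middle K (Or.inr (by rw [hd]))) not_false
    · exact absurd hd8 (by norm_num)
    · exact absurd hd8 (by norm_num)
    · exact absurd hd8 (by norm_num)
    · right
      exact Subgroup.eq_top_of_card_eq K (by rw [hd, cardG])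
  have hne : H ≠ ⊤ := by
    intro h
    rw [h, Subgroup.card_top, cardG] at hH
    norm_num at hH
  refine ⟨⟨hne, hmax⟩, ?_⟩
  rcases hmax (Subgroup.normalizer (H : Set (GL (Fin 3) (ZMod 2)))) Subgroup.le_normalizer with h | h
  · exact h
  · exact absurd (no_normal H (Subgroup.normalizer_eq_top_iff.mp h)
      (by rw [hH]; norm_num) (by rw [hH]; norm_num)) not_false
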